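/- Let k ≥ 1 and p ∈ (1, 2). For every z ∈ ℝ^k one has (1/√2) · min{|z|, |z|^{p/2}} ≤ |V_p(z)| ≤ min{|z|, |z|^{p/2}}. -/
import Mathlib


noncomputable def Vp (p : ℝ) {E : Type*} [NormedAddCommGroup E] [NormedSpace ℝ E] (z : E) : E :=
  ((1 + ‖z‖ ^ 2) ^ ((p - 2) / 4)) • z

lemma two_rpow_lb (e : ℝ) (he : -(1/2) ≤ e) : 1 / Real.sqrt 2 ≤ (2:ℝ) ^ e := by
  have h1 : (2:ℝ) ^ (-(1/2):ℝ) ≤ (2:ℝ) ^ e :=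
    Real.rpow_le_rpow_of_exponent_le one_le_two he
  have h2 : (2:ℝ) ^ (-(1/2):ℝ) = 1 / Real.sqrt 2 := by
    rw [Real.rpow_neg (by norm_num), ← Real.sqrt_eq_rpow, one_div]
  rw [h2] at h1; exact h1

lemma aux3 (p t : ℝ) (hp1 : 1 < p) (hp2 : p < 2) (ht : 0 ≤ t) :
    1 / Real.sqrt 2 * min t (t ^ (p/2)) ≤ (1 + t^2) ^ ((p-2)/4) * t ∧
    (1 + t^2) ^ ((p-2)/4) * t ≤ min t (t ^ (p/2)) := by
  have hbase : (0:ℝ) < 1 + t^2 := by positivity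
  have he : (p-2)/4 ≤ 0 := by linarith
  have hC : 0 < (1 + t^2) ^ ((p-2)/4) := Real.rpow_pos_of_pos hbase _
  have hs : 0 < 1 / Real.sqrt 2 := by positivity
  rcases eq_or_lt_of_le ht with h0 | h0
  · rw [← h0, Real.zero_rpow (by positivity)]
    simp
  have hpow2 : (t^2 : ℝ) = t ^ ((2:ℕ):ℝ) := (Real.rpow_natCast t 2).symm
  have hkey : (t ^ ((2:ℕ):ℝ)) ^ ((p-2)/4) = t ^ ((p-2)/2) := by
    rw [← Real.rpow_mul ht]
    ring_nf
  have hstep : t ^ ((p-2)/2) * t = t ^ (p/2) := by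
    rw [← Real.rpow_add_one h0.ne']
    ring_nf
  constructor
  · rcases le_total t 1 with h1 | h1
    · have h2 : (2:ℝ)^((p-2)/4) ≤ (1+t^2)^((p-2)/4) :=
        Real.rpow_le_rpow_of_nonpos hbase (by nlinarith) he
      have h3 : 1/Real.sqrt 2 ≤ (2:ℝ)^((p-2)/4) := two_rpow_lb _ (by linarith)
      calc 1 / Real.sqrt 2 * min t (t ^ (p/2))
          ≤ 1 / Real.sqrt 2 * t := by
            exact mul_le_mul_of_nonneg_left (min_le_left _ _) hs.le
        _ ≤ (1 + t^2) ^ ((p-2)/4) * t :=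
            mul_le_mul_of_nonneg_right (h3.trans h2) ht
    · have h2 : (2*t^2 : ℝ)^((p-2)/4) ≤ (1+t^2)^((p-2)/4) :=
        Real.rpow_le_rpow_of_nonpos hbase (by nlinarith) he
      have h4 : (2*t^2 : ℝ)^((p-2)/4) = (2:ℝ)^((p-2)/4) * t ^ ((p-2)/2) := by
        rw [Real.mul_rpow (by norm_num) (by positivity), hpow2, hkey]
      have h3 : 1/Real.sqrt 2 ≤ (2:ℝ)^((p-2)/4) := two_rpow_lb _ (by linarith)
      have htp : 0 ≤ t ^ ((p-2)/2) := Real.rpow_nonneg ht _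
      calc 1 / Real.sqrt 2 * min t (t ^ (p/2))
          ≤ 1 / Real.sqrt 2 * (t ^ (p/2)) :=
            mul_le_mul_of_nonneg_left (min_le_right _ _) hs.le
        _ = 1 / Real.sqrt 2 * (t ^ ((p-2)/2) * t) := by rw [hstep]
        _ ≤ (2:ℝ)^((p-2)/4) * (t ^ ((p-2)/2) * t) := by
            apply mul_le_mul_of_nonneg_right h3; positivity
        _ = (2*t^2 : ℝ)^((p-2)/4) * t := by rw [h4]; ring
        _ ≤ (1 + t^2) ^ ((p-2)/4) * t := mul_le_mul_of_nonneg_right h2 ht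
  · apply le_min
    · have h1 : (1+t^2)^((p-2)/4) ≤ 1 :=
        Real.rpow_le_one_of_one_le_of_nonpos (by nlinarith) he
      nlinarith
    · have h1 : (1+t^2)^((p-2)/4) ≤ (t^2)^((p-2)/4) :=
        Real.rpow_le_rpow_of_nonpos (by positivity) (by nlinarith) he
      have h2 : (t^2 : ℝ)^((p-2)/4) = t ^ ((p-2)/2) := by rw [hpow2, hkey]
      calc (1+t^2)^((p-2)/4) * t ≤ t ^ ((p-2)/2) * t := by
            rw [← h2]; exact mul_le_mul_of_nonneg_right h1 ht
        _ = t ^ (p/2) := hstep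

theorem stmt_3 (k : ℕ) (hk : 1 ≤ k) (p : ℝ) (hp1 : 1 < p) (hp2 : p < 2)
    (z : EuclideanSpace ℝ (Fin k)) :
    (1 / Real.sqrt 2) * min ‖z‖ (‖z‖ ^ (p / 2)) ≤ ‖Vp p z‖ ∧
      ‖Vp p z‖ ≤ min ‖z‖ (‖z‖ ^ (p / 2)) := by
  have hV : ‖Vp p z‖ = (1 + ‖z‖^2) ^ ((p-2)/4) * ‖z‖ := by
    rw [Vp, norm_smul, Real.norm_eq_abs,
      abs_of_pos (Real.rpow_pos_of_pos (by positivity) _)]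
  rw [hV]
  exact aux3 p ‖z‖ hp1 hp2 (norm_nonneg z)
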